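/- Suppose φ, ψ : 𝓕 → 𝓔 are additive mappings such that ⟨φ(z), ψ(w)⟩ = 0 and a·⟨φ(z), φ(w)⟩·a* = (1−a)·⟨ψ(z), ψ(w)⟩·(1−a)* for all z, w ∈ 𝓕, and set 𝓚 := φ(𝓕) + ψ(𝓕). If f : 𝓔 → 𝓖 is an orthogonally a-Jensen mapping, then there exist unique mappings A : 𝓔 → 𝓖 and B : 𝓔 × 𝓔 → 𝓖 such that: A is additive on 𝓚 with A(a·x) = a·A(x) for x ∈ 𝓚; B is symmetric (B(x,y) = B(y,x)), biadditive on 𝓚 × 𝓚, satisfies B(a·x, a·x) = a·B(x,x) and B((1−a)·x, (1−a)·x) = (1−a)·B(x,x) for x ∈ 𝓚, is orthogonality preserving on 𝓚 × 𝓚 (⟨x,y⟩ = 0 implies B(x,y) = 0 for x, y ∈ 𝓚); and f(x) = A(x) + B(x,x) + f(0) for all x ∈ 𝓚. Moreover, B(x,y) = (1/8)(f(x+y) + f(−x−y) − f(x−y) − f(−x+y)) and A(x) = (1/2)(f(x) − f(−x)) for every x, y ∈ 𝓔. -/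

import Mathlib

set_option linter.unusedSectionVars false
set_option maxHeartbeats 1000000


open scoped RightActions

variable {A : Type*} [CStarAlgebra A] [PartialOrder A] [StarOrderedRing A]
/-- The Hilbert C⋆-module class as it stood in the older Mathlib (right `Aᵐᵒᵖ`-action,
inner product satisfying `⟪x, y <• a⟫ = ⟪x, y⟫ * a`); Mathlib's `CStarModule` now uses a left
action instead. -/
class CStarModuleRight (A : outParam <| Type*) (E : Type*) [NonUnitalSemiring A] [StarRing A]
    [Module ℂ A] [AddCommGroup E] [Module ℂ E] [PartialOrder A] [SMul Aᵐᵒᵖ E] [Norm A] [Norm E]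
    extends Inner A E where
  inner_add_right {x} {y} {z} : inner x (y + z) = inner x y + inner x z
  inner_self_nonneg {x} : 0 ≤ inner x x
  inner_self {x} : inner x x = 0 ↔ x = 0
  inner_op_smul_right {a : A} {x y : E} : inner x (y <• a) = inner x y * a
  inner_smul_right_complex {z : ℂ} {x} {y} : inner x (z • y) = z • inner x y
  star_inner x y : star (inner x y) = inner y x
  norm_eq_sqrt_norm_inner_self x : ‖x‖ = √‖inner x x‖

variable {E : Type*} [NormedAddCommGroup E] [Module ℂ E] [Module Aᵐᵒᵖ E] [CStarModuleRight A E]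
variable {F : Type*} [NormedAddCommGroup F] [Module ℂ F] [Module Aᵐᵒᵖ F] [CStarModuleRight A F]
variable {G : Type*} [NormedAddCommGroup G] [Module ℂ G] [Module Aᵐᵒᵖ G] [CStarModuleRight A G]


/-- A mapping `f : E → G` between inner product `A`-modules is *orthogonally `a`-Jensen* if
`⟪x, y⟫ = 0` implies `f (a·x + (1-a)·y) = a·f x + (1-a)·f y` (module actions written as right
actions `<•`, since `E`, `G` are right `A`-modules). -/
def OrthAJensen (a : A) (f : E → G) : Prop :=
  ∀ x y : E, inner (𝕜 := A) x y = 0 →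
    f (x <• a + y <• (1 - a)) = f x <• a + f y <• (1 - a)

/-- The submodule `K = φ(F) + ψ(F)`. -/
def KSet (φ ψ : F → E) : Set E := {z | ∃ x y : F, z = φ x + ψ y}

/-- The pair `(T, B)` has the properties listed in Theorem 2.7: `T` is additive on `K` and
satisfies `T (a·x) = a·T x` on `K`; `B` is symmetric, biadditive on `K × K`, satisfies
`B (a·x, a·x) = a·B (x, x)` and `B ((1-a)·x, (1-a)·x) = (1-a)·B (x, x)` on `K`, is
orthogonality preserving on `K × K`; and `f x = T x + B x x + f 0` on `K`. -/
def GoodPair (a : A) (φ ψ : F → E) (f : E → G) (p : (E → G) × (E → E → G)) : Prop :=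
  (∀ z₁ ∈ KSet φ ψ, ∀ z₂ ∈ KSet φ ψ, p.1 (z₁ + z₂) = p.1 z₁ + p.1 z₂) ∧
  (∀ z ∈ KSet φ ψ, p.1 (z <• a) = p.1 z <• a) ∧
  (∀ x y : E, p.2 x y = p.2 y x) ∧
  (∀ z₁ ∈ KSet φ ψ, ∀ z₂ ∈ KSet φ ψ, ∀ z₃ ∈ KSet φ ψ,
    p.2 (z₁ + z₂) z₃ = p.2 z₁ z₃ + p.2 z₂ z₃ ∧ p.2 z₁ (z₂ + z₃) = p.2 z₁ z₂ + p.2 z₁ z₃) ∧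
  (∀ z ∈ KSet φ ψ, p.2 (z <• a) (z <• a) = p.2 z z <• a) ∧
  (∀ z ∈ KSet φ ψ, p.2 (z <• (1 - a)) (z <• (1 - a)) = p.2 z z <• (1 - a)) ∧
  (∀ z₁ ∈ KSet φ ψ, ∀ z₂ ∈ KSet φ ψ, inner (𝕜 := A) z₁ z₂ = 0 → p.2 z₁ z₂ = 0) ∧
  (∀ z ∈ KSet φ ψ, f z = p.1 z + p.2 z z + f 0)

attribute [simp] CStarModuleRight.inner_op_smul_right CStarModuleRight.inner_smul_right_complex

namespace CStarModuleRight

@[simp] lemma inner_zero_right (x : E) : inner (𝕜 := A) x (0 : E) = 0 := by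
  have h := CStarModuleRight.inner_add_right (A := A) (x := x) (y := (0 : E)) (z := 0)
  rw [add_zero] at h
  exact left_eq_add.mp h

@[simp] lemma inner_zero_left (x : E) : inner (𝕜 := A) (0 : E) x = 0 := by
  rw [← CStarModuleRight.star_inner x, CStarModuleRight.inner_zero_right, star_zero]

@[simp] lemma inner_neg_right (x y : E) : inner (𝕜 := A) x (-y) = -inner (𝕜 := A) x y := by
  have h := CStarModuleRight.inner_add_right (A := A) (x := x) (y := y) (z := -y)
  rw [add_neg_cancel, CStarModuleRight.inner_zero_right] at h
  exact eq_neg_of_add_eq_zero_right h.symm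

@[simp] lemma inner_neg_left (x y : E) : inner (𝕜 := A) (-x) y = -inner (𝕜 := A) x y := by
  rw [← CStarModuleRight.star_inner y, CStarModuleRight.inner_neg_right, star_neg,
    CStarModuleRight.star_inner]

lemma inner_sub_right (x y z : E) :
    inner (𝕜 := A) x (y - z) = inner (𝕜 := A) x y - inner (𝕜 := A) x z := by
  rw [sub_eq_add_neg, CStarModuleRight.inner_add_right, CStarModuleRight.inner_neg_right,
    ← sub_eq_add_neg]

lemma inner_add_left (x y z : E) :
    inner (𝕜 := A) (x + y) z = inner (𝕜 := A) x z + inner (𝕜 := A) y z := by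
  rw [← CStarModuleRight.star_inner z, CStarModuleRight.inner_add_right, star_add,
    CStarModuleRight.star_inner, CStarModuleRight.star_inner]

lemma inner_sub_left (x y z : E) :
    inner (𝕜 := A) (x - y) z = inner (𝕜 := A) x z - inner (𝕜 := A) y z := by
  rw [← CStarModuleRight.star_inner z, CStarModuleRight.inner_sub_right, star_sub,
    CStarModuleRight.star_inner, CStarModuleRight.star_inner]

@[simp] lemma inner_op_smul_left (b : A) (x y : E) :
    inner (𝕜 := A) (x <• b) y = star b * inner (𝕜 := A) x y := by
  rw [← CStarModuleRight.star_inner y, CStarModuleRight.inner_op_smul_right, star_mul,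
    CStarModuleRight.star_inner]

@[simp] lemma inner_smul_left_complex (c : ℂ) (x y : E) :
    inner (𝕜 := A) (c • x) y = star c • inner (𝕜 := A) x y := by
  rw [← CStarModuleRight.star_inner y, CStarModuleRight.inner_smul_right_complex, star_smul,
    CStarModuleRight.star_inner]

end CStarModuleRight

namespace Thm27

lemma smul_op_comm (c : ℂ) (b : A) (x : E) : (c • x) <• b = c • (x <• b) := by
  rw [← sub_eq_zero, ← CStarModuleRight.inner_self (A := A)]
  simp [CStarModuleRight.inner_sub_right, CStarModuleRight.inner_sub_left, CStarModuleRight.inner_op_smul_left,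
    CStarModuleRight.inner_smul_left_complex, smul_mul_assoc, mul_smul_comm]

lemma op_op (b b' : A) (x : E) : (x <• b) <• b' = x <• (b * b') := by
  show MulOpposite.op b' • MulOpposite.op b • x = _
  rw [smul_smul, ← MulOpposite.op_mul]

lemma conj_invOf (a : A) [Invertible a] (u : A) : ⅟a * (a * u * star a) * star (⅟a) = u := by
  letI : Invertible (star a) := Invertible.star a
  rw [star_invOf]
  rw [mul_assoc, mul_assoc, mul_invOf_self, mul_one, ← mul_assoc, invOf_mul_self, one_mul]

lemma half_half {x y : G} (h : x + x = y + y) : x = y := by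
  have h2 : (2:ℂ) • x = (2:ℂ) • y := by rw [two_smul, two_smul]; exact h
  simpa using congrArg (fun z => (2:ℂ)⁻¹ • z) h2

section additive
variable {φ : F → E} (hφ : ∀ z w : F, φ (z + w) = φ z + φ w)
include hφ

lemma map_zero' : φ 0 = 0 := by
  have h := hφ 0 0
  rw [add_zero] at h
  exact left_eq_add.mp h

lemma map_neg' (z : F) : φ (-z) = - φ z := by
  have h := hφ z (-z)
  rw [add_neg_cancel, map_zero' hφ] at h
  exact (eq_neg_of_add_eq_zero_right h.symm)

lemma map_sub' (z w : F) : φ (z - w) = φ z - φ w := by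
  have h := hφ (z - w) w
  rw [sub_add_cancel] at h
  exact eq_sub_of_add_eq h.symm

end additive

section jensen
variable (a : A) (f : E → G)

lemma jensen_a (hf : OrthAJensen a f) (h0 : f 0 = 0) (x : E) : f (x <• a) = f x <• a := by
  have h := hf x 0 (by simp)
  simpa [h0] using h

lemma jensen_a' (hf : OrthAJensen a f) (h0 : f 0 = 0) (x : E) :
    f (x <• (1 - a)) = f x <• (1 - a) := by
  have h := hf 0 x (by simp)
  simpa [h0] using h

lemma orth_add [Invertible a] [Invertible (1 - a)] (hf : OrthAJensen a f) (h0 : f 0 = 0)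
    {u v : E} (huv : inner (𝕜 := A) u v = 0) : f (u + v) = f u + f v := by
  have h := hf (u <• ⅟a) (v <• ⅟(1 - a))
    (by simp [CStarModuleRight.inner_op_smul_left, huv])
  have e1 : (u <• ⅟a) <• a = u := by
    rw [op_op, invOf_mul_self]
    show MulOpposite.op (1:A) • u = u
    rw [MulOpposite.op_one, one_smul]
  have e2 : (v <• ⅟(1 - a)) <• (1 - a) = v := by
    rw [op_op, invOf_mul_self]
    show MulOpposite.op (1:A) • v = v
    rw [MulOpposite.op_one, one_smul]
  have r1 : f (u <• ⅟a) <• a = f u := by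
    rw [← jensen_a a f hf h0, e1]
  have r2 : f (v <• ⅟(1 - a)) <• (1 - a) = f v := by
    rw [← jensen_a' a f hf h0, e2]
  rw [e1, e2, r1, r2] at h
  exact h

end jensen

section master
variable (a : A) [Invertible a] [Invertible (1 - a)]
variable (φ ψ : F → E)
variable (hφ : ∀ z w : F, φ (z + w) = φ z + φ w) (hψ : ∀ z w : F, ψ (z + w) = ψ z + ψ w)
variable (ho : ∀ z w : F, inner (𝕜 := A) (φ z) (ψ w) = 0)
variable (m : A)
variable (hm : ∀ z w : F,
    inner (𝕜 := A) (φ z) (φ w) = m * inner (𝕜 := A) (ψ z) (ψ w) * star m)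
variable (h : E → G) (hh : OrthAJensen a h) (h0 : h 0 = 0)

include hφ hψ ho hm hh h0

lemma master (z w : F) :
    h (φ (z + w)) + h (ψ (z - w) <• star m)
      = h (φ z) + h (ψ z <• star m) + (h (φ w) + h (ψ (-w) <• star m)) := by
  have ho' : ∀ p q : F, inner (𝕜 := A) (ψ p) (φ q) = 0 := fun p q => by
    rw [← CStarModuleRight.star_inner, ho, star_zero]
  have ho2 : ∀ (p q : F) (b : A), inner (𝕜 := A) (φ p) (ψ q <• b) = 0 := fun p q b => by
    rw [CStarModuleRight.inner_op_smul_right, ho, zero_mul]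
  have hK : inner (𝕜 := A) (φ z + ψ z <• star m) (φ w - ψ w <• star m) = 0 := by
    have t1 : inner (𝕜 := A) (φ z) (ψ w <• star m) = 0 := ho2 z w _
    have t2 : inner (𝕜 := A) (ψ z <• star m) (φ w) = 0 := by
      rw [CStarModuleRight.inner_op_smul_left, ho', mul_zero]
    have t3 : inner (𝕜 := A) (ψ z <• star m) (ψ w <• star m)
        = inner (𝕜 := A) (φ z) (φ w) := by
      rw [CStarModuleRight.inner_op_smul_left, CStarModuleRight.inner_op_smul_right, star_star, hm z w,
        mul_assoc]
    rw [CStarModuleRight.inner_add_left, CStarModuleRight.inner_sub_right, CStarModuleRight.inner_sub_right,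
      t1, t2, t3]
    abel
  have key := orth_add a h hh h0 hK
  have e1 : (φ z + ψ z <• star m) + (φ w - ψ w <• star m)
      = φ (z + w) + ψ (z - w) <• star m := by
    rw [hφ z w, map_sub' hψ z w, smul_sub]
    abel
  have s1 : h (φ (z + w) + ψ (z - w) <• star m)
      = h (φ (z + w)) + h (ψ (z - w) <• star m) := orth_add a h hh h0 (ho2 _ _ _)
  have s2 : h (φ z + ψ z <• star m) = h (φ z) + h (ψ z <• star m) :=
    orth_add a h hh h0 (ho2 _ _ _)
  have s3 : h (φ w - ψ w <• star m) = h (φ w) + h (ψ (-w) <• star m) := by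
    have e : φ w - ψ w <• star m = φ w + ψ (-w) <• star m := by
      rw [map_neg' hψ, smul_neg]
      abel
    rw [e]
    exact orth_add a h hh h0 (ho2 _ _ _)
  rw [e1, s1, s2, s3] at key
  exact key

lemma odd_additive (hodd : ∀ x : E, h (-x) = - h x) (z w : F) :
    h (φ (z + w)) = h (φ z) + h (φ w) := by
  have nψ : ∀ u : F, h (ψ (-u) <• star m) = - h (ψ u <• star m) := fun u => by
    rw [map_neg' hψ, smul_neg, hodd]
  have M1 := master a φ ψ hφ hψ ho m hm h hh h0 z w
  have M2 := master a φ ψ hφ hψ ho m hm h hh h0 w z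
  rw [nψ] at M1 M2
  rw [add_comm w z] at M2
  have nz : ψ (w - z) <• star m = -(ψ (z - w) <• star m) := by
    rw [map_sub' hψ, map_sub' hψ, ← smul_neg, neg_sub]
  rw [nz, hodd] at M2
  apply half_half
  calc h (φ (z + w)) + h (φ (z + w))
      = (h (φ (z + w)) + h (ψ (z - w) <• star m))
        + (h (φ (z + w)) + - h (ψ (z - w) <• star m)) := by abel
    _ = (h (φ z) + h (ψ z <• star m) + (h (φ w) + - h (ψ w <• star m)))
        + (h (φ w) + h (ψ w <• star m) + (h (φ z) + - h (ψ z <• star m))) := by rw [M1, M2]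
    _ = (h (φ z) + h (φ w)) + (h (φ z) + h (φ w)) := by abel

lemma even_quad (heven : ∀ x : E, h (-x) = h x) (z w : F) :
    h (φ (z + w)) + h (φ (z - w))
      = h (φ z) + h (φ z) + (h (φ w) + h (φ w)) := by
  have nψ : ∀ u : F, h (ψ (-u) <• star m) = h (ψ u <• star m) := fun u => by
    rw [map_neg' hψ, smul_neg, heven]
  have nφ : ∀ u : F, h (φ (-u)) = h (φ u) := fun u => by
    rw [map_neg' hφ, heven]
  have hq0 : h (ψ (0:F) <• star m) = 0 := by
    rw [map_zero' hψ]
    show h (MulOpposite.op (star m) • (0:E)) = 0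
    rw [smul_zero, h0]
  have hp0 : h (φ (0:F)) = 0 := by rw [map_zero' hφ, h0]
  -- p (u) = q (u) for all u
  have hpq : ∀ u : F, h (φ u) = h (ψ u <• star m) := by
    intro u
    set z₀ : F := (2:ℂ)⁻¹ • u with hz₀
    have hzz : z₀ + z₀ = u := by rw [hz₀]; module
    have M1 := master a φ ψ hφ hψ ho m hm h hh h0 z₀ z₀
    have M3 := master a φ ψ hφ hψ ho m hm h hh h0 z₀ (-z₀)
    rw [sub_self, hq0, add_zero, nψ] at M1
    rw [add_neg_cancel, hp0, sub_neg_eq_add, neg_neg, zero_add, nφ] at M3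
    rw [hzz] at M1 M3
    exact M1.trans M3.symm
  have M1 := master a φ ψ hφ hψ ho m hm h hh h0 z w
  rw [nψ, ← hpq, ← hpq, ← hpq] at M1
  exact M1

end master

lemma quad_parallelogram (p : F → G)
    (hq : ∀ z w : F, p (z + w) + p (z - w) = p z + p z + (p w + p w)) (x y z : F) :
    (p ((x + y) + z) - p (x + y) - p z) + (p ((x - y) + z) - p (x - y) - p z)
      = (p (x + z) - p x - p z) + (p (x + z) - p x - p z) := by
  have h1 := hq (x + z) y
  have h2 := hq x y
  have e1 : (x + y) + z = (x + z) + y := by abel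
  have e2 : (x - y) + z = (x + z) - y := by abel
  rw [e1, e2]
  have h1' : p ((x + z) + y) = p (x + z) + p (x + z) + (p y + p y) - p ((x + z) - y) :=
    eq_sub_of_add_eq h1
  have h2' : p (x + y) = p x + p x + (p y + p y) - p (x - y) := eq_sub_of_add_eq h2
  rw [h1', h2']
  abel

lemma quad_biadd (p : F → G)
    (hq : ∀ z w : F, p (z + w) + p (z - w) = p z + p z + (p w + p w))
    (hp0 : p 0 = 0) (x y z : F) :
    p ((x + y) + z) - p (x + y) - p z
      = (p (x + z) - p x - p z) + (p (y + z) - p y - p z) := by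
  set u : F := (2:ℂ)⁻¹ • (x + y) with hu
  set v : F := (2:ℂ)⁻¹ • (x - y) with hv
  have huv1 : u + v = x := by rw [hu, hv]; module
  have huv2 : u - v = y := by rw [hu, hv]; module
  have huu : u + u = x + y := by rw [hu]; module
  have q1 := quad_parallelogram p hq u v z
  rw [huv1, huv2] at q1
  have q2 := quad_parallelogram p hq u u z
  rw [huu, sub_self, zero_add, hp0, sub_zero, sub_self, add_zero] at q2
  rw [q2, q1]

end Thm27

/-- Theorem 2.7, the main result: an orthogonally `a`-Jensen mapping `f` is of the form
`f x = T x + B x x + f 0` on `K = φ(F) + ψ(F)` for a unique pair `(T, B)` as in `GoodPair`;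
moreover `B x y = (1/8)(f (x+y) + f (-x-y) - f (x-y) - f (-x+y))` and
`T x = (1/2)(f x - f (-x))` for all `x, y ∈ E`. -/
theorem main_theorem (a : A) [Invertible a] [Invertible (1 - a)] (φ ψ : F → E)
    (hφ : ∀ z w : F, φ (z + w) = φ z + φ w)
    (hψ : ∀ z w : F, ψ (z + w) = ψ z + ψ w)
    (horth : ∀ z w : F, inner (𝕜 := A) (φ z) (ψ w) = 0)
    (heq : ∀ z w : F,
      a * inner (𝕜 := A) (φ z) (φ w) * star a
        = (1 - a) * inner (𝕜 := A) (ψ z) (ψ w) * star (1 - a))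
    (f : E → G) (hf : OrthAJensen a f) :
    ∃! p : (E → G) × (E → E → G), GoodPair a φ ψ f p ∧
      (∀ x y : E,
        p.2 x y = (8 : ℂ)⁻¹ • (f (x + y) + f (-x - y) - f (x - y) - f (-x + y))) ∧
      (∀ x : E, p.1 x = (2 : ℂ)⁻¹ • (f x - f (-x))) := by
  obtain ⟨f', hf'x⟩ : ∃ h : E → G, ∀ x, h x = f x - f 0 := ⟨_, fun _ => rfl⟩
  have hf'0 : f' 0 = 0 := by rw [hf'x]; exact sub_self _
  have hone : (f 0) <• a + (f 0) <• (1 - a) = f 0 := by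
    rw [← add_smul, ← MulOpposite.op_add, show a + (1 - a) = 1 by abel, MulOpposite.op_one,
      one_smul]
  have hf'J : OrthAJensen a f' := by
    intro x y hxy
    rw [hf'x, hf'x, hf'x, hf x y hxy, smul_sub, smul_sub,
      show f x <• a - f 0 <• a + (f y <• (1 - a) - f 0 <• (1 - a))
        = f x <• a + f y <• (1 - a) - (f 0 <• a + f 0 <• (1 - a)) from by abel, hone]
  have hf'neg : ∀ x y : E, inner (𝕜 := A) x y = 0 →
      f' (-(x <• a + y <• (1 - a))) = f' (-x) <• a + f' (-y) <• (1 - a) := by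
    intro x y hxy
    have h := hf'J (-x) (-y) (by simp [hxy])
    rw [show (-x) <• a + (-y) <• (1 - a) = -(x <• a + y <• (1 - a)) from by
      rw [smul_neg, smul_neg, neg_add]] at h
    exact h
  obtain ⟨T, hTx'⟩ : ∃ h : E → G, ∀ x, h x = (2:ℂ)⁻¹ • (f' x - f' (-x)) := ⟨_, fun _ => rfl⟩
  obtain ⟨g, hgx'⟩ : ∃ h : E → G, ∀ x, h x = (2:ℂ)⁻¹ • (f' x + f' (-x)) := ⟨_, fun _ => rfl⟩
  obtain ⟨Bm, hBmx⟩ : ∃ h : E → E → G, ∀ x y,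
      h x y = (8 : ℂ)⁻¹ • (f (x + y) + f (-x - y) - f (x - y) - f (-x + y)) :=
    ⟨_, fun _ _ => rfl⟩
  have hTx : ∀ x : E, T x = (2:ℂ)⁻¹ • (f x - f (-x)) := by
    intro x; simp only [hTx', hf'x]; module
  have hgx : ∀ x : E, g x = (2:ℂ)⁻¹ • (f x + f (-x)) - f 0 := by
    intro x; simp only [hgx', hf'x]; module
  have hT0 : T 0 = 0 := by rw [hTx' 0, neg_zero, sub_self, smul_zero]
  have hg0 : g 0 = 0 := by rw [hgx' 0, neg_zero, hf'0]; simp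
  have hTodd : ∀ x : E, T (-x) = - T x := by
    intro x; rw [hTx', hTx', neg_neg]; module
  have hgeven : ∀ x : E, g (-x) = g x := by
    intro x; rw [hgx', hgx', neg_neg]; module
  have hTJ : OrthAJensen a T := by
    intro x y hxy
    rw [hTx', hTx', hTx', hf'J x y hxy, hf'neg x y hxy, Thm27.smul_op_comm, Thm27.smul_op_comm,
      ← smul_add]
    congr 1
    rw [smul_sub, smul_sub]
    abel
  have hgJ : OrthAJensen a g := by
    intro x y hxy
    rw [hgx', hgx', hgx', hf'J x y hxy, hf'neg x y hxy, Thm27.smul_op_comm, Thm27.smul_op_comm,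
      ← smul_add]
    congr 1
    rw [smul_add, smul_add]
    abel
  have TorthAdd : ∀ {u v : E}, inner (𝕜 := A) u v = 0 → T (u + v) = T u + T v :=
    fun {u v} huv => Thm27.orth_add a T hTJ hT0 huv
  have gorthAdd : ∀ {u v : E}, inner (𝕜 := A) u v = 0 → g (u + v) = g u + g v :=
    fun {u v} huv => Thm27.orth_add a g hgJ hg0 huv
  have horth' : ∀ z w : F, inner (𝕜 := A) (ψ z) (φ w) = 0 := fun z w => by
    rw [← CStarModuleRight.star_inner, horth, star_zero]
  have hm₁ : ∀ z w : F, inner (𝕜 := A) (φ z) (φ w)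
      = (⅟a * (1 - a)) * inner (𝕜 := A) (ψ z) (ψ w) * star (⅟a * (1 - a)) := by
    intro z w
    have c := Thm27.conj_invOf a (inner (𝕜 := A) (φ z) (φ w))
    rw [heq z w] at c
    rw [← c, star_mul]
    simp only [mul_assoc]
  have hm₂ : ∀ z w : F, inner (𝕜 := A) (ψ z) (ψ w)
      = (⅟(1 - a) * a) * inner (𝕜 := A) (φ z) (φ w) * star (⅟(1 - a) * a) := by
    intro z w
    have c := Thm27.conj_invOf (1 - a) (inner (𝕜 := A) (ψ z) (ψ w))
    rw [← heq z w] at c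
    rw [← c, star_mul]
    simp only [mul_assoc]
  have Tφ : ∀ z w : F, T (φ (z + w)) = T (φ z) + T (φ w) :=
    Thm27.odd_additive a φ ψ hφ hψ horth _ hm₁ T hTJ hT0 hTodd
  have Tψ : ∀ z w : F, T (ψ (z + w)) = T (ψ z) + T (ψ w) :=
    Thm27.odd_additive a ψ φ hψ hφ horth' _ hm₂ T hTJ hT0 hTodd
  have gφ : ∀ z w : F, g (φ (z + w)) + g (φ (z - w))
      = g (φ z) + g (φ z) + (g (φ w) + g (φ w)) :=
    Thm27.even_quad a φ ψ hφ hψ horth _ hm₁ g hgJ hg0 hgeven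
  have gψ : ∀ z w : F, g (ψ (z + w)) + g (ψ (z - w))
      = g (ψ z) + g (ψ z) + (g (ψ w) + g (ψ w)) :=
    Thm27.even_quad a ψ φ hψ hφ horth' _ hm₂ g hgJ hg0 hgeven
  have Tsplit : ∀ x y : F, T (φ x + ψ y) = T (φ x) + T (ψ y) := fun x y => TorthAdd (horth x y)
  have gsplit : ∀ x y : F, g (φ x + ψ y) = g (φ x) + g (ψ y) := fun x y => gorthAdd (horth x y)
  have gφ0 : g (φ 0) = 0 := by rw [Thm27.map_zero' hφ]; exact hg0
  have gψ0 : g (ψ 0) = 0 := by rw [Thm27.map_zero' hψ]; exact hg0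
  have Bg : ∀ x y : E, Bm x y = (4:ℂ)⁻¹ • (g (x + y) - g (x - y)) := by
    intro x y
    rw [hBmx, hgx, hgx, show -x - y = -(x + y) from by abel, show -x + y = -(x - y) from by abel]
    module
  have hsym : ∀ x y : E, Bm x y = Bm y x := by
    intro x y
    rw [Bg, Bg, show y + x = x + y from add_comm y x, show y - x = -(x - y) from by abel,
      hgeven]
  have BmK : ∀ x y x' y' : F, Bm (φ x + ψ y) (φ x' + ψ y')
      = (2:ℂ)⁻¹ • ((g (φ (x + x')) - g (φ x) - g (φ x'))
          + (g (ψ (y + y')) - g (ψ y) - g (ψ y'))) := by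
    intro x y x' y'
    rw [Bg, show (φ x + ψ y) + (φ x' + ψ y') = φ (x + x') + ψ (y + y') from by
        rw [hφ, hψ]; abel,
      show (φ x + ψ y) - (φ x' + ψ y') = φ (x - x') + ψ (y - y') from by
        rw [Thm27.map_sub' hφ, Thm27.map_sub' hψ]; abel,
      gsplit, gsplit]
    have r1 : g (φ (x - x')) = g (φ x) + g (φ x) + (g (φ x') + g (φ x')) - g (φ (x + x')) :=
      eq_sub_of_add_eq' (gφ x x')
    have r2 : g (ψ (y - y')) = g (ψ y) + g (ψ y) + (g (ψ y') + g (ψ y')) - g (ψ (y + y')) :=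
      eq_sub_of_add_eq' (gψ y y')
    rw [r1, r2]
    module
  have biadd1 : ∀ x₁ y₁ x₂ y₂ x₃ y₃ : F,
      Bm ((φ x₁ + ψ y₁) + (φ x₂ + ψ y₂)) (φ x₃ + ψ y₃)
        = Bm (φ x₁ + ψ y₁) (φ x₃ + ψ y₃) + Bm (φ x₂ + ψ y₂) (φ x₃ + ψ y₃) := by
    intro x₁ y₁ x₂ y₂ x₃ y₃
    rw [show (φ x₁ + ψ y₁) + (φ x₂ + ψ y₂) = φ (x₁ + x₂) + ψ (y₁ + y₂) from by
      rw [hφ, hψ]; abel]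
    rw [BmK, BmK, BmK]
    have b1 := Thm27.quad_biadd (fun u => g (φ u)) gφ gφ0 x₁ x₂ x₃
    have b2 := Thm27.quad_biadd (fun u => g (ψ u)) gψ gψ0 y₁ y₂ y₃
    beta_reduce at b1 b2
    rw [b1, b2]
    module
  have Borth : ∀ z₁ z₂ : E, inner (𝕜 := A) z₁ z₂ = 0 → Bm z₁ z₂ = 0 := by
    intro z₁ z₂ h12
    rw [Bg, gorthAdd h12, show z₁ - z₂ = z₁ + (-z₂) from sub_eq_add_neg _ _,
      gorthAdd (show inner (𝕜 := A) z₁ (-z₂) = 0 from by simp [h12]), hgeven]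
    simp
  have hadd : ∀ z₁ ∈ KSet φ ψ, ∀ z₂ ∈ KSet φ ψ, T (z₁ + z₂) = T z₁ + T z₂ := by
    rintro z₁ ⟨x₁, y₁, rfl⟩ z₂ ⟨x₂, y₂, rfl⟩
    rw [show (φ x₁ + ψ y₁) + (φ x₂ + ψ y₂) = φ (x₁ + x₂) + ψ (y₁ + y₂) from by
        rw [hφ, hψ]; abel,
      Tsplit, Tφ, Tψ, Tsplit, Tsplit]
    abel
  have hbiadd : ∀ z₁ ∈ KSet φ ψ, ∀ z₂ ∈ KSet φ ψ, ∀ z₃ ∈ KSet φ ψ,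
      Bm (z₁ + z₂) z₃ = Bm z₁ z₃ + Bm z₂ z₃ ∧ Bm z₁ (z₂ + z₃) = Bm z₁ z₂ + Bm z₁ z₃ := by
    rintro z₁ ⟨x₁, y₁, rfl⟩ z₂ ⟨x₂, y₂, rfl⟩ z₃ ⟨x₃, y₃, rfl⟩
    refine ⟨biadd1 x₁ y₁ x₂ y₂ x₃ y₃, ?_⟩
    rw [hsym (φ x₁ + ψ y₁) ((φ x₂ + ψ y₂) + (φ x₃ + ψ y₃)), biadd1 x₂ y₂ x₃ y₃ x₁ y₁,
      hsym (φ x₂ + ψ y₂) (φ x₁ + ψ y₁), hsym (φ x₃ + ψ y₃) (φ x₁ + ψ y₁)]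
  have hBa : ∀ z : E, Bm (z <• a) (z <• a) = Bm z z <• a := by
    intro z
    simp only [Bg, sub_self, hg0, sub_zero]
    rw [show z <• a + z <• a = (z + z) <• a from (smul_add _ _ _).symm,
      Thm27.jensen_a a g hgJ hg0, Thm27.smul_op_comm]
  have hBa' : ∀ z : E, Bm (z <• (1 - a)) (z <• (1 - a)) = Bm z z <• (1 - a) := by
    intro z
    simp only [Bg, sub_self, hg0, sub_zero]
    rw [show z <• (1 - a) + z <• (1 - a) = (z + z) <• (1 - a) from (smul_add _ _ _).symm,
      Thm27.jensen_a' a g hgJ hg0, Thm27.smul_op_comm]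
  have hrepr : ∀ z ∈ KSet φ ψ, f z = T z + Bm z z + f 0 := by
    rintro z ⟨x, y, rfl⟩
    have p2 : g (φ (x + x)) = g (φ x) + g (φ x) + (g (φ x) + g (φ x)) := by
      have h := gφ x x
      rw [sub_self, gφ0, add_zero] at h
      exact h
    have q2 : g (ψ (y + y)) = g (ψ y) + g (ψ y) + (g (ψ y) + g (ψ y)) := by
      have h := gψ y y
      rw [sub_self, gψ0, add_zero] at h
      exact h
    have hBzz : Bm (φ x + ψ y) (φ x + ψ y) = g (φ x + ψ y) := by
      rw [Bg, sub_self, hg0, sub_zero,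
        show (φ x + ψ y) + (φ x + ψ y) = φ (x + x) + ψ (y + y) from by rw [hφ, hψ]; abel,
        gsplit, p2, q2, gsplit]
      module
    rw [hBzz, hTx, hgx]
    module
  refine ⟨(T, Bm), ⟨⟨hadd, fun z _ => Thm27.jensen_a a T hTJ hT0 z, hsym, hbiadd,
    fun z _ => hBa z, fun z _ => hBa' z, fun z₁ _ z₂ _ h => Borth z₁ z₂ h, hrepr⟩,
    fun x y => hBmx x y, fun x => hTx x⟩, ?_⟩
  rintro ⟨T', B'⟩ ⟨-, hB', hT'⟩
  have e1 : T' = T := funext fun x => (hT' x).trans (hTx x).symm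
  have e2 : B' = Bm := funext fun x => funext fun y => (hB' x y).trans (hBmx x y).symm
  rw [e1, e2]
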